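/- Under the hypotheses of the previous lemma with the sequence satisfying f(x_n) = f(x_0) - c·r_n^α, one has the quantitative lower bound: there exists C' > 0 and n_1 such that meas(B(X_0, r_n) ∩ Ω^c) ≥ C'·r_n² for all n ≥ n_1. -/

import Mathlib

open Real MeasureTheory Filter Topology

theorem measure_lower_bound_of_seq (α : ℝ) (hα : 0 < α) (hα1 : α < 1)
    (f : ℝ → ℝ) (C : ℝ) (hf : ∀ x y : ℝ, |f x - f y| ≤ C * |x - y| ^ α)
    (x₀ c : ℝ) (hc : 0 < c) (r : ℕ → ℝ) (hrpos : ∀ n, 0 < r n)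
    (hrlim : Tendsto r atTop (𝓝 0))
    (x : ℕ → ℝ) (hx : ∀ n, x n ∈ Set.Ioo (x₀ - r n) (x₀ + r n))
    (n₀ : ℕ) (hfx : ∀ n, n₀ ≤ n → f (x n) = f x₀ - c * r n ^ α) :
    ∃ C' > 0, ∃ n₁ : ℕ, ∀ n, n₁ ≤ n →
      ENNReal.ofReal (C' * r n ^ 2) ≤
        volume (Metric.ball (x₀, f x₀) (r n) ∩ {p : ℝ × ℝ | p.2 ≤ f p.1}ᶜ) := by
  have hα0 : α ≠ 0 := ne_of_gt hα
  -- C > 0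
  have hx0 := hx n₀
  have h1 := hfx n₀ le_rfl
  have hrn0 : 0 < r n₀ := hrpos n₀
  have hkey0 : c * r n₀ ^ α ≤ C * |x₀ - x n₀| ^ α := by
    calc c * r n₀ ^ α = f x₀ - f (x n₀) := by rw [h1]; ring
    _ ≤ |f x₀ - f (x n₀)| := le_abs_self _
    _ ≤ C * |x₀ - x n₀| ^ α := hf x₀ (x n₀)
  have hcr : 0 < c * r n₀ ^ α := by positivity
  have hC : 0 < C := by
    nlinarith [Real.rpow_nonneg (abs_nonneg (x₀ - x n₀)) α]
  set ε : ℝ := min ((c / (2*C)) ^ (1/α) / 2) (1/2) with hεdef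
  have hδpos : 0 < (c / (2*C)) ^ (1/α) := Real.rpow_pos_of_pos (by positivity) _
  have hεpos : 0 < ε := lt_min (by positivity) (by norm_num)
  have hεle : ε ≤ 1/2 := min_le_right _ _
  have hkey : C * (2*ε) ^ α ≤ c / 2 := by
    have h2ε : 2*ε ≤ (c/(2*C)) ^ (1/α) := by
      have := min_le_left ((c / (2*C)) ^ (1/α) / 2) (1/2); linarith
    have hstep : (2*ε) ^ α ≤ ((c/(2*C)) ^ (1/α)) ^ α :=
      Real.rpow_le_rpow (by positivity) h2ε hα.le
    have heq : ((c/(2*C)) ^ (1/α)) ^ α = c/(2*C) := by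
      rw [← Real.rpow_mul (by positivity), one_div, inv_mul_cancel₀ hα0, Real.rpow_one]
    rw [heq] at hstep
    calc C * (2*ε) ^ α ≤ C * (c/(2*C)) := by
          exact mul_le_mul_of_nonneg_left hstep hC.le
    _ = c/2 := by field_simp
  refine ⟨ε^2/2, by positivity, ?_⟩
  -- find n₂ with r n ^ (1-α) < c/ε eventually
  have htend : Tendsto (fun n => r n ^ (1-α)) atTop (𝓝 ((0:ℝ) ^ (1-α))) :=
    hrlim.rpow_const (Or.inr (by linarith))
  rw [Real.zero_rpow (by linarith : (1:ℝ) - α ≠ 0)] at htend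
  obtain ⟨n₂, hn₂⟩ := eventually_atTop.mp
    (htend.eventually_lt_const (show (0:ℝ) < c/ε by positivity))
  refine ⟨max n₀ n₂, fun n hn => ?_⟩
  have hn0 : n₀ ≤ n := le_trans (le_max_left _ _) hn
  have hn2 : n₂ ≤ n := le_trans (le_max_right _ _) hn
  set R := r n with hRdef
  have hR : 0 < R := hrpos n
  have hfn := hfx n hn0
  obtain ⟨hxl, hxr⟩ := hx n
  have hsmall : R ^ (1-α) ≤ c/ε := (hn₂ n hn2).le
  have hRα : (0:ℝ) < R ^ α := Real.rpow_pos_of_pos hR _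
  have hεR : ε * R ≤ c * R ^ α := by
    have hRsplit : R = R^(1-α) * R^α := by
      rw [← Real.rpow_add hR]; norm_num
    calc ε * R = ε * (R^(1-α) * R^α) := by rw [← hRsplit]
    _ ≤ ε * ((c/ε) * R^α) := by
        apply mul_le_mul_of_nonneg_left _ hεpos.le
        exact mul_le_mul_of_nonneg_right hsmall hRα.le
    _ = c * R^α := by field_simp
  set A := x₀ + (1-ε)*R with hAdef
  set B := x₀ - (1-ε)*R with hBdef
  set u := max (min (x n) A) B with hudef
  have h1ε : 0 < 1 - ε := by linarith
  have h1εR : 0 < (1-ε)*R := mul_pos h1ε hR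
  have hεRpos : 0 < ε * R := mul_pos hεpos hR
  have hBA : B ≤ A := by rw [hAdef, hBdef]; linarith
  have huB : B ≤ u := le_max_right _ _
  have huA : u ≤ A := max_le (min_le_right _ _) hBA
  have hux : |u - x n| ≤ ε * R := by
    rw [abs_le]
    constructor
    · have hmin : min (x n) A ≤ u := le_max_left _ _
      rcases le_total (x n) A with h | h
      · rw [min_eq_left h] at hmin; linarith
      · rw [min_eq_right h] at hmin; linarith
    · rcases le_total (x n) A with h | h
      · rcases le_total B (x n) with h' | h'
        · have : u = x n := by rw [hudef, min_eq_left h, max_eq_left h']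
          rw [this]; linarith
        · have : u = B := by rw [hudef, min_eq_left h, max_eq_right h']
          rw [this, hBdef]; linarith
      · have : u = A := by rw [hudef, min_eq_right h, max_eq_left hBA]
        rw [this]; linarith
  have hu0 : |u - x₀| ≤ (1-ε)*R := by
    rw [abs_le]; constructor
    · rw [hBdef] at huB; linarith
    · rw [hAdef] at huA; linarith
  obtain ⟨hu0l, hu0r⟩ := abs_le.1 hu0
  set S : Set (ℝ × ℝ) := Set.Ioo (u - ε*R/2) (u + ε*R/2) ×ˢ Set.Ioo (f x₀ - ε*R/2) (f x₀)
    with hSdef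
  have hεRltR : ε * R ≤ (1/2) * R := mul_le_mul_of_nonneg_right hεle hR.le
  have hsub : S ⊆ Metric.ball (x₀, f x₀) R ∩ {p : ℝ × ℝ | p.2 ≤ f p.1}ᶜ := by
    rintro ⟨p, q⟩ ⟨hp, hq⟩
    simp only [Set.mem_Ioo] at hp hq
    constructor
    · rw [← ball_prod_same]
      refine ⟨?_, ?_⟩ <;> rw [Metric.mem_ball, Real.dist_eq, abs_lt] <;> constructor
      · linarith [hp.1]
      · linarith [hp.2]
      · linarith [hq.1]
      · linarith [hq.2]
    · simp only [Set.mem_compl_iff, Set.mem_setOf_eq, not_le]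
      have hpu : |p - u| ≤ ε*R/2 := by
        rw [abs_le]; exact ⟨by linarith [hp.1], by linarith [hp.2]⟩
      have hpx : |p - x n| ≤ 2*ε*R := by
        calc |p - x n| = |(p - u) + (u - x n)| := by ring_nf
        _ ≤ |p - u| + |u - x n| := abs_add_le _ _
        _ ≤ 2*ε*R := by linarith
      have hfp : f p - f (x n) ≤ (c/2) * R ^ α := by
        calc f p - f (x n) ≤ |f p - f (x n)| := le_abs_self _
        _ ≤ C * |p - x n| ^ α := hf p (x n)
        _ ≤ C * (2*ε*R) ^ α := by
            exact mul_le_mul_of_nonneg_left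
              (Real.rpow_le_rpow (abs_nonneg _) hpx hα.le) hC.le
        _ = C * ((2*ε)^α * R^α) := by
            rw [← Real.mul_rpow (by positivity) hR.le]
        _ = (C * (2*ε)^α) * R^α := by ring
        _ ≤ (c/2) * R^α := mul_le_mul_of_nonneg_right hkey hRα.le
      linarith [hq.1]
  have hS : volume S = ENNReal.ofReal (ε*R) * ENNReal.ofReal (ε*R/2) := by
    rw [hSdef, Measure.volume_eq_prod, Measure.prod_prod, Real.volume_Ioo, Real.volume_Ioo]
    congr 1 <;> congr 1 <;> ring
  calc ENNReal.ofReal (ε^2/2 * R^2)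
      = ENNReal.ofReal ((ε*R) * (ε*R/2)) := by ring_nf
    _ = ENNReal.ofReal (ε*R) * ENNReal.ofReal (ε*R/2) := ENNReal.ofReal_mul hεRpos.le
    _ = volume S := hS.symm
    _ ≤ _ := measure_mono hsub
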